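/- Let A, B be d×d complex matrices with equal diagonals. Then the following are equivalent: (i) X^{(1)}_{(A,B)} ∈ M_d(ℂ)⊗M_d(ℂ) is separable; (ii) X^{(2)}_{(A,B)} ∈ M_d(ℂ)⊗M_d(ℂ) is separable; (iii) the pair (A,B) is pairwise completely positive (PCP). -/

import Mathlib

open Matrix Kronecker

/-- The LDOI matrix `X^{(3)}_{(A,B,C)}` associated to a triple of `d × d` matrices. -/
def X3 {d : ℕ} (A B C : Matrix (Fin d) (Fin d) ℂ) :
    Matrix (Fin d × Fin d) (Fin d × Fin d) ℂ :=
  Matrix.of fun p q =>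
    if p.1 = q.1 ∧ p.2 = q.2 then A p.1 p.2
    else if p.1 = p.2 ∧ q.1 = q.2 then B p.1 q.1
    else if p.1 = q.2 ∧ p.2 = q.1 then C p.1 q.1
    else 0

/-- The LDUI matrix `X^{(1)}_{(A,B)} = X^{(3)}_{(A, diag A, B)}`. -/
def X1 {d : ℕ} (A B : Matrix (Fin d) (Fin d) ℂ) :
    Matrix (Fin d × Fin d) (Fin d × Fin d) ℂ :=
  X3 A (Matrix.diagonal fun i => A i i) B

/-- The CLDUI matrix `X^{(2)}_{(A,B)} = X^{(3)}_{(A, B, diag A)}`. -/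
def X2 {d : ℕ} (A B : Matrix (Fin d) (Fin d) ℂ) :
    Matrix (Fin d × Fin d) (Fin d × Fin d) ℂ :=
  X3 A B (Matrix.diagonal fun i => A i i)

/-- A bipartite matrix is separable if it is a finite sum of Kronecker products of
rank-one matrices `v v^*` and `w w^*`. -/
def Separable {d : ℕ} (X : Matrix (Fin d × Fin d) (Fin d × Fin d) ℂ) : Prop :=
  ∃ (n : ℕ) (v w : Fin n → Fin d → ℂ),
    X = ∑ k, (Matrix.vecMulVec (v k) (star (v k))) ⊗ₖ (Matrix.vecMulVec (w k) (star (w k)))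

/-- Pairwise complete positivity of a pair `(A,B)`. -/
def PCP {d : ℕ} (A B : Matrix (Fin d) (Fin d) ℂ) : Prop :=
  ∃ (d' : ℕ) (V W : Matrix (Fin d) (Fin d') ℂ),
    A = (V ⊙ V.map star) * (W ⊙ W.map star)ᴴ ∧
    B = (V ⊙ W) * (V ⊙ W)ᴴ

open Complex Finset in
lemma sum_pow_I_four (e g : ℕ) (he : e ≤ 2) (hg : g ≤ 2) :
    ∑ t : Fin 4, ((I ^ e) * (-I) ^ g) ^ (t : ℕ) = if e = g then 4 else 0 := by
  have h3 : ((3 : Fin 4) : ℕ) = 3 := rfl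
  have h2 : ((2 : Fin 4) : ℕ) = 2 := rfl
  rw [Fin.sum_univ_four]
  by_cases h : e = g
  · subst h
    rw [← mul_pow]
    simp
    norm_num
  · rw [if_neg h]
    interval_cases e <;> interval_cases g <;> simp_all [pow_succ]

lemma indicator_iff {d : ℕ} (p1 p2 q1 q2 : Fin d) :
    (∀ i : Fin d,
      ((if i = p1 then 1 else 0) + (if i = q2 then 1 else 0) : ℕ) =
      ((if i = q1 then 1 else 0) + (if i = p2 then 1 else 0) : ℕ)) ↔
    ((p1 = q1 ∧ p2 = q2) ∨ (p1 = p2 ∧ q1 = q2)) := by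
  constructor
  · intro h
    by_cases h1 : p1 = q1
    · subst h1
      left
      refine ⟨rfl, ?_⟩
      have hq := h q2
      by_contra hne
      simp [Ne.symm hne] at hq
    · right
      have hp := h p1
      have hq := h q1
      simp [h1, Ne.symm h1] at hp hq
      split_ifs at hp hq <;> first | omega | exact ⟨by assumption, by assumption⟩
  · rintro (⟨rfl, rfl⟩ | ⟨rfl, rfl⟩) i
    · rfl
    · exact add_comm _ _

open Complex Finset in
lemma phase_sum {d : ℕ} (p1 p2 q1 q2 : Fin d) :
    ∑ θ : Fin d → Fin 4,
      (I ^ ((θ p1 : ℕ) + (θ q2 : ℕ)) * (-I) ^ ((θ q1 : ℕ) + (θ p2 : ℕ)))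
    = if (p1 = q1 ∧ p2 = q2) ∨ (p1 = p2 ∧ q1 = q2) then (4 : ℂ) ^ d else 0 := by
  set e : Fin d → ℕ := fun i => (if i = p1 then 1 else 0) + (if i = q2 then 1 else 0) with he
  set g : Fin d → ℕ := fun i => (if i = q1 then 1 else 0) + (if i = p2 then 1 else 0) with hg
  have key : ∀ θ : Fin d → Fin 4,
      I ^ ((θ p1 : ℕ) + (θ q2 : ℕ)) * (-I) ^ ((θ q1 : ℕ) + (θ p2 : ℕ))
      = ∏ i : Fin d, ((I ^ (e i)) * (-I) ^ (g i)) ^ (θ i : ℕ) := by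
    intro θ
    have : ∀ i, ((I ^ (e i)) * (-I) ^ (g i)) ^ (θ i : ℕ)
        = I ^ ((θ i : ℕ) * e i) * (-I) ^ ((θ i : ℕ) * g i) := by
      intro i
      rw [mul_pow, ← pow_mul, ← pow_mul, mul_comm (e i), mul_comm (g i)]
    simp_rw [this]
    rw [Finset.prod_mul_distrib, Finset.prod_pow_eq_pow_sum, Finset.prod_pow_eq_pow_sum]
    congr 1
    · congr 1
      simp only [he, mul_add, mul_ite, mul_one, mul_zero]
      rw [Finset.sum_add_distrib, Finset.sum_ite_eq' univ p1 (fun i => (θ i : ℕ)),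
        Finset.sum_ite_eq' univ q2 (fun i => (θ i : ℕ))]
      simp
    · congr 1
      simp only [hg, mul_add, mul_ite, mul_one, mul_zero]
      rw [Finset.sum_add_distrib, Finset.sum_ite_eq' univ q1 (fun i => (θ i : ℕ)),
        Finset.sum_ite_eq' univ p2 (fun i => (θ i : ℕ))]
      simp
  simp_rw [key]
  rw [← Fintype.prod_sum (fun i (t : Fin 4) => ((I ^ (e i)) * (-I) ^ (g i)) ^ (t : ℕ))]
  have he2 : ∀ i, e i ≤ 2 := by intro i; simp only [he]; split_ifs <;> omega
  have hg2 : ∀ i, g i ≤ 2 := by intro i; simp only [hg]; split_ifs <;> omega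
  simp_rw [fun i => sum_pow_I_four (e i) (g i) (he2 i) (hg2 i)]
  by_cases hc : (p1 = q1 ∧ p2 = q2) ∨ (p1 = p2 ∧ q1 = q2)
  · rw [if_pos hc]
    have hall : ∀ i, e i = g i := (indicator_iff p1 p2 q1 q2).mpr hc
    simp [hall]
  · rw [if_neg hc]
    have hall : ¬ ∀ i, e i = g i := fun hall => hc ((indicator_iff p1 p2 q1 q2).mp hall)
    push_neg at hall
    obtain ⟨i0, hi0⟩ := hall
    exact Finset.prod_eq_zero (Finset.mem_univ i0) (if_neg hi0)

lemma sep_of_fintype {d : ℕ} {ι : Type} [Fintype ι] [DecidableEq ι] (v w : ι → Fin d → ℂ)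
    {X : Matrix (Fin d × Fin d) (Fin d × Fin d) ℂ}
    (hX : X = ∑ k : ι, (Matrix.vecMulVec (v k) (star (v k))) ⊗ₖ
      (Matrix.vecMulVec (w k) (star (w k)))) : Separable X := by
  obtain ⟨e⟩ := Fintype.truncEquivFin ι
  refine ⟨Fintype.card ι, v ∘ e.symm, w ∘ e.symm, ?_⟩
  rw [hX]
  exact (Fintype.sum_equiv e.symm _ _ (fun k => rfl)).symm

lemma sep_pt {d : ℕ} {X Y : Matrix (Fin d × Fin d) (Fin d × Fin d) ℂ}
    (hXY : ∀ p q, Y p q = X (p.1, q.2) (q.1, p.2)) (h : Separable X) : Separable Y := by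
  obtain ⟨n, v, w, rfl⟩ := h
  refine ⟨n, v, fun k => star (w k), ?_⟩
  ext p q
  rw [hXY]
  simp only [Matrix.sum_apply, Matrix.kroneckerMap_apply, Matrix.vecMulVec_apply,
    Pi.star_apply, star_star]
  exact Finset.sum_congr rfl fun k _ => by ring

lemma X1_eq_pt {d : ℕ} (A B : Matrix (Fin d) (Fin d) ℂ) (p q : Fin d × Fin d) :
    X1 A B p q = X2 A B (p.1, q.2) (q.1, p.2) := by
  obtain ⟨p1, p2⟩ := p
  obtain ⟨q1, q2⟩ := q
  simp only [X1, X2, X3, Matrix.of_apply]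
  split_ifs <;> first
    | tauto
    | exact absurd ⟨by grind, by grind⟩ ‹¬(p1 = q1 ∧ p2 = q2)›

open Complex Finset in
lemma sep_X2_of_pcp {d : ℕ} (A B : Matrix (Fin d) (Fin d) ℂ) (h : PCP A B) :
    Separable (X2 A B) := by
  obtain ⟨d', V, W, hA, hB⟩ := h
  refine sep_of_fintype (ι := Fin d' × (Fin d → Fin 4))
    (fun kθ i => (2 : ℂ)⁻¹ ^ d * I ^ (kθ.2 i : ℕ) * V i kθ.1)
    (fun kθ i => (-I) ^ (kθ.2 i : ℕ) * W i kθ.1) ?_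
  ext ⟨p1, p2⟩ ⟨q1, q2⟩
  simp only [Matrix.sum_apply, Matrix.kroneckerMap_apply, Matrix.vecMulVec_apply, Pi.star_apply]
  rw [Fintype.sum_prod_type]
  have hstarI : star I = -I := by simp [Complex.star_def, Complex.conj_I]
  have hstarnI : star (-I) = I := by simp [Complex.star_def, Complex.conj_I]
  have hstarc : star ((2 : ℂ)⁻¹ ^ d) = (2 : ℂ)⁻¹ ^ d := by simp
  have hsummand : ∀ (k : Fin d') (θ : Fin d → Fin 4),
      ((2 : ℂ)⁻¹ ^ d * I ^ (θ p1 : ℕ) * V p1 k) * star ((2 : ℂ)⁻¹ ^ d * I ^ (θ q1 : ℕ) * V q1 k)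
        * (((-I) ^ (θ p2 : ℕ) * W p2 k) * star ((-I) ^ (θ q2 : ℕ) * W q2 k))
      = (I ^ ((θ p1 : ℕ) + (θ q2 : ℕ)) * (-I) ^ ((θ q1 : ℕ) + (θ p2 : ℕ))) *
        ((2 : ℂ)⁻¹ ^ d * (2 : ℂ)⁻¹ ^ d *
          (V p1 k * star (V q1 k) * (W p2 k * star (W q2 k)))) := by
    intro k θ
    simp only [star_mul', star_pow, hstarI, hstarnI, hstarc]
    rw [pow_add, pow_add]
    ring
  simp_rw [hsummand, ← Finset.sum_mul, phase_sum p1 p2 q1 q2]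
  have hC : (4 : ℂ) ^ d * ((2 : ℂ)⁻¹ ^ d * (2 : ℂ)⁻¹ ^ d) = 1 := by
    rw [← mul_pow, ← mul_pow]
    norm_num
  have hC' : ∀ m : ℂ, (4 : ℂ) ^ d * ((2 : ℂ)⁻¹ ^ d * (2 : ℂ)⁻¹ ^ d * m) = m := by
    intro m
    rw [show (4 : ℂ) ^ d * ((2 : ℂ)⁻¹ ^ d * (2 : ℂ)⁻¹ ^ d * m)
      = ((4 : ℂ) ^ d * ((2 : ℂ)⁻¹ ^ d * (2 : ℂ)⁻¹ ^ d)) * m by ring, hC, one_mul]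
  by_cases hc : (p1 = q1 ∧ p2 = q2) ∨ (p1 = p2 ∧ q1 = q2)
  · simp_rw [if_pos hc, hC']
    rcases hc with ⟨h1, h2⟩ | ⟨h1, h2⟩
    · subst h1; subst h2
      show X2 A B (p1, p2) (p1, p2) = _
      simp only [X2, X3, Matrix.of_apply, if_pos (⟨rfl, rfl⟩ : p1 = p1 ∧ p2 = p2)]
      rw [hA]
      simp only [Matrix.mul_apply, Matrix.hadamard_apply, Matrix.conjTranspose_apply,
        Matrix.map_apply, star_mul', star_star]
      exact Finset.sum_congr rfl fun k _ => by ring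
    · subst h1; subst h2
      show X2 A B (p1, p1) (q1, q1) = _
      by_cases h3 : p1 = q1
      · subst h3
        simp only [X2, X3, Matrix.of_apply, if_pos (⟨rfl, rfl⟩ : p1 = p1 ∧ p1 = p1)]
        rw [hA]
        simp only [Matrix.mul_apply, Matrix.hadamard_apply, Matrix.conjTranspose_apply,
          Matrix.map_apply, star_mul', star_star]
        exact Finset.sum_congr rfl fun k _ => by ring
      · simp only [X2, X3, Matrix.of_apply]
        split_ifs with h1 h2
        · exact absurd h1.1 h3
        · rw [hB]
          simp only [Matrix.mul_apply, Matrix.hadamard_apply, Matrix.conjTranspose_apply,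
            star_mul']
          exact Finset.sum_congr rfl fun k _ => by ring
        · exact absurd ⟨trivial, trivial⟩ h2
  · simp_rw [if_neg hc, zero_mul, Finset.sum_const_zero]
    simp only [X2, X3, Matrix.of_apply]
    split_ifs with h1 h2 h3
    · exact absurd (Or.inl h1) hc
    · exact absurd (Or.inr h2) hc
    · exact Matrix.diagonal_apply_ne _ fun hh => hc (Or.inl ⟨hh, h3.2.trans (hh.symm.trans h3.1)⟩)
    · rfl

lemma pcp_of_sep_X2 {d : ℕ} (A B : Matrix (Fin d) (Fin d) ℂ)
    (hdiag : ∀ i, A i i = B i i) (h : Separable (X2 A B)) : PCP A B := by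
  obtain ⟨n, v, w, hX⟩ := h
  have hent : ∀ p q, X2 A B p q =
      ∑ k, v k p.1 * star (v k q.1) * (w k p.2 * star (w k q.2)) := by
    intro p q
    rw [hX]
    simp [Matrix.sum_apply, Matrix.kroneckerMap_apply, Matrix.vecMulVec_apply]
  refine ⟨n, Matrix.of fun i k => v k i, Matrix.of fun i k => w k i, ?_, ?_⟩
  · ext i j
    have h1 := hent (i, j) (i, j)
    simp only [X2, X3, Matrix.of_apply, eq_self_iff_true, and_self, if_true] at h1
    rw [h1]
    simp only [Matrix.mul_apply, Matrix.hadamard_apply, Matrix.conjTranspose_apply,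
      Matrix.map_apply, Matrix.of_apply, star_mul', star_star]
    exact Finset.sum_congr rfl fun k _ => by ring
  · ext i j
    have h1 := hent (i, i) (j, j)
    by_cases hij : i = j
    · subst hij
      simp only [X2, X3, Matrix.of_apply, eq_self_iff_true, and_self, if_true] at h1
      rw [← hdiag i, h1]
      simp only [Matrix.mul_apply, Matrix.hadamard_apply, Matrix.conjTranspose_apply,
        Matrix.of_apply, star_mul']
      exact Finset.sum_congr rfl fun k _ => by ring
    · simp only [X2, X3, Matrix.of_apply, eq_self_iff_true, and_self, if_true,
        if_neg hij] at h1
      rw [h1]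
      simp only [Matrix.mul_apply, Matrix.hadamard_apply, Matrix.conjTranspose_apply,
        Matrix.of_apply, star_mul']
      exact Finset.sum_congr rfl fun k _ => by ring

theorem stmt2 {d : ℕ} (A B : Matrix (Fin d) (Fin d) ℂ)
    (hdiag : ∀ i, A i i = B i i) :
    [Separable (X1 A B), Separable (X2 A B), PCP A B].TFAE := by
  tfae_have 1 ↔ 2 :=
    ⟨sep_pt (fun p q => (X1_eq_pt A B (p.1, q.2) (q.1, p.2)).symm),
     sep_pt (X1_eq_pt A B)⟩
  tfae_have 2 ↔ 3 := ⟨pcp_of_sep_X2 A B hdiag, sep_X2_of_pcp A B⟩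
  tfae_finish
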